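/- Let ℋ be a complex Hilbert space and U_1, …, U_n one-parameter unitary groups on ℋ that pairwise commute: U_k(s)U_l(t) = U_l(t)U_k(s) for all k, l and s, t ∈ ℝ. Fix j and let T be a symmetric operator with domain D(T) satisfying the weak Weyl relation with respect to U_j (for all t, U_j(t)(D(T)) ⊆ D(T) and T(U_j(t)ψ) = U_j(t)(Tψ + tψ) for ψ ∈ D(T)), and suppose that for every k ≠ j and every t ∈ ℝ: U_k(t)(D(T)) = D(T) and T(U_k(t)ψ) = U_k(t)(Tψ) for all ψ ∈ D(T). Define V(t) := U_1(t)∘U_2(t)∘⋯∘U_n(t). Then V is a one-parameter unitary group and T satisfies the weak Weyl relation with respect to V: for all t ∈ ℝ, V(t)(D(T)) ⊆ D(T) and T(V(t)ψ) = V(t)(Tψ + tψ) for all ψ ∈ D(T). -/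

import Mathlib

open scoped InnerProductSpace

/-- The composition `V(t) = U_1(t) ∘ U_2(t) ∘ ⋯ ∘ U_n(t)` of `n` one-parameter unitary
groups (multiplication of linear isometry equivalences is composition). -/
noncomputable def prodGroup {ℋ : Type*} [NormedAddCommGroup ℋ] [InnerProductSpace ℂ ℋ]
    {n : ℕ} (U : Fin n → ℝ → (ℋ ≃ₗᵢ[ℂ] ℋ)) (t : ℝ) : ℋ ≃ₗᵢ[ℂ] ℋ :=
  (List.ofFn fun k => U k t).prod

/-- Product of pointwise products of commuting families. -/
lemma ofFn_prod_mul {M : Type*} [Monoid M] :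
    ∀ {n : ℕ} (f g : Fin n → M), (∀ k l, Commute (f k) (g l)) →
      (List.ofFn fun k => f k * g k).prod = (List.ofFn f).prod * (List.ofFn g).prod := by
  intro n
  induction n with
  | zero => intro f g _; simp
  | succ m ih =>
    intro f g h
    have hf0 : Commute (g 0) (List.ofFn fun k : Fin m => f k.succ).prod := by
      refine (Commute.list_prod_right _ _ ?_).symm.symm
      intro x hx
      obtain ⟨i, hi⟩ := List.mem_ofFn.mp hx
      exact hi ▸ (h i.succ 0).symm
    calc (List.ofFn fun k : Fin (m+1) => f k * g k).prod
        = (f 0 * g 0) * (List.ofFn fun k : Fin m => f k.succ * g k.succ).prod := by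
          rw [List.ofFn_succ, List.prod_cons]
      _ = (f 0 * g 0) * ((List.ofFn fun k : Fin m => f k.succ).prod *
            (List.ofFn fun k : Fin m => g k.succ).prod) := by
          rw [ih _ _ (fun k l => h k.succ l.succ)]
      _ = f 0 * (g 0 * (List.ofFn fun k : Fin m => f k.succ).prod) *
            (List.ofFn fun k : Fin m => g k.succ).prod := by
          simp [mul_assoc]
      _ = (f 0 * (List.ofFn fun k : Fin m => f k.succ).prod) *
            (g 0 * (List.ofFn fun k : Fin m => g k.succ).prod) := by
          rw [hf0.eq]; simp [mul_assoc]
      _ = (List.ofFn f).prod * (List.ofFn g).prod := by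
          rw [List.ofFn_succ (f := f), List.ofFn_succ (f := g), List.prod_cons,
            List.prod_cons]

lemma real_smul_lie {ℋ : Type*} [NormedAddCommGroup ℋ] [InnerProductSpace ℂ ℋ]
    (e : ℋ ≃ₗᵢ[ℂ] ℋ) (t : ℝ) (x : ℋ) : e (t • x) = t • e x := by
  rw [← Complex.coe_smul, map_smul, Complex.coe_smul]

/-- if `T` is a strong time operator of `U_j` (weak Weyl relation) and, for
`k ≠ j`, `U_k(t)` leaves `D(T)` invariant and commutes with `T`, then `T` is a strong
time operator of the product group `V(t) = U_1(t) ∘ ⋯ ∘ U_n(t)` of the pairwise commuting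
groups `U_1, …, U_n`. -/
theorem strong_time_operator_of_product_group
    {ℋ : Type*} [NormedAddCommGroup ℋ] [InnerProductSpace ℂ ℋ]
    (n : ℕ) (U : Fin n → ℝ → (ℋ ≃ₗᵢ[ℂ] ℋ))
    (hU0 : ∀ k, ∀ x : ℋ, U k 0 x = x)
    (hUadd : ∀ k, ∀ s t : ℝ, ∀ x : ℋ, U k (s + t) x = U k s (U k t x))
    (hcomm : ∀ k l, ∀ s t : ℝ, ∀ x : ℋ, U k s (U l t x) = U l t (U k s x))
    (j : Fin n) (T : ℋ →ₗ.[ℂ] ℋ)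
    (hTsymm : ∀ φ ψ : T.domain, ⟪T φ, (ψ : ℋ)⟫_ℂ = ⟪(φ : ℋ), T ψ⟫_ℂ)
    (hWW : ∀ (t : ℝ) (ψ : ℋ) (hψ : ψ ∈ T.domain),
      ∃ h' : U j t ψ ∈ T.domain, T ⟨U j t ψ, h'⟩ = U j t (T ⟨ψ, hψ⟩ + t • ψ))
    (hcommT : ∀ k, k ≠ j → ∀ t : ℝ,
      (U k t '' (T.domain : Set ℋ) = (T.domain : Set ℋ)) ∧
      ∀ (ψ : ℋ) (hψ : ψ ∈ T.domain) (h' : U k t ψ ∈ T.domain),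
        T ⟨U k t ψ, h'⟩ = U k t (T ⟨ψ, hψ⟩)) :
    (∀ x : ℋ, prodGroup U 0 x = x) ∧
    (∀ s t : ℝ, ∀ x : ℋ, prodGroup U (s + t) x = prodGroup U s (prodGroup U t x)) ∧
    (∀ (t : ℝ) (ψ : ℋ) (hψ : ψ ∈ T.domain),
      ∃ h' : prodGroup U t ψ ∈ T.domain,
        T ⟨prodGroup U t ψ, h'⟩ = prodGroup U t (T ⟨ψ, hψ⟩ + t • ψ)) := by
  refine ⟨?_, ?_, ?_⟩
  · -- V(0) = 1
    intro x
    have h1 : (List.ofFn fun k => U k 0).prod = 1 := by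
      apply List.prod_eq_one
      intro e he
      obtain ⟨i, hi⟩ := List.mem_ofFn.mp he
      subst hi
      exact LinearIsometryEquiv.ext (hU0 i)
    simp [prodGroup, h1]
  · -- group law
    intro s t x
    have key : prodGroup U (s + t) = prodGroup U s * prodGroup U t := by
      unfold prodGroup
      have : (List.ofFn fun k => U k (s + t)) = List.ofFn fun k => U k s * U k t := by
        refine congrArg List.ofFn (funext fun i => ?_)
        exact LinearIsometryEquiv.ext fun x => hUadd i s t x
      rw [this]
      exact ofFn_prod_mul _ _ fun k l => LinearIsometryEquiv.ext fun x => by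
        simpa using hcomm k l s t x
    rw [key]; rfl
  · -- weak Weyl relation
    intro t ψ hψ
    -- general claim for arbitrary lists of indices
    have claim : ∀ (L : List (Fin n)) (φ : ℋ) (hφ : φ ∈ T.domain),
        ∃ h' : (L.map fun k => U k t).prod φ ∈ T.domain,
          T ⟨(L.map fun k => U k t).prod φ, h'⟩ =
            (L.map fun k => U k t).prod (T ⟨φ, hφ⟩ + ((L.count j : ℝ) * t) • φ) := by
      intro L
      induction L with
      | nil =>
        intro φ hφ
        refine ⟨by simpa using hφ, ?_⟩
        simp
      | cons k L ih =>
        intro φ hφ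
        obtain ⟨hmem, heq⟩ := ih φ hφ
        set W : ℋ ≃ₗᵢ[ℂ] ℋ := (L.map fun k => U k t).prod with hW
        have happ : ((k :: L).map fun k => U k t).prod φ = U k t (W φ) := rfl
        by_cases hkj : k = j
        · subst hkj
          obtain ⟨h2, heq2⟩ := hWW t (W φ) hmem
          refine ⟨by simpa [happ] using h2, ?_⟩
          have : T ⟨U k t (W φ), h2⟩ = U k t (T ⟨W φ, hmem⟩ + t • W φ) := heq2
          calc T ⟨((k :: L).map fun l => U l t).prod φ, _⟩
              = U k t (T ⟨W φ, hmem⟩ + t • W φ) := heq2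
            _ = U k t (W (T ⟨φ, hφ⟩ + ((L.count k : ℝ) * t) • φ) + t • W φ) := by rw [heq]
            _ = U k t (W ((T ⟨φ, hφ⟩ + ((L.count k : ℝ) * t) • φ) + t • φ)) := by
                simp only [map_add W, real_smul_lie]
            _ = ((k :: L).map fun l => U l t).prod
                  (T ⟨φ, hφ⟩ + (((k :: L).count k : ℝ) * t) • φ) := by
                have hc : ((k :: L).count k : ℝ) = (L.count k : ℝ) + 1 := by
                  simp [List.count_cons]
                have : (T ⟨φ, hφ⟩ + ((L.count k : ℝ) * t) • φ) + t • φ =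
                    T ⟨φ, hφ⟩ + (((k :: L).count k : ℝ) * t) • φ := by
                  rw [hc, add_mul, one_mul, add_smul, add_assoc]
                rw [this]; rfl
        · obtain ⟨himg, hTcomm⟩ := hcommT k hkj t
          have h2 : U k t (W φ) ∈ T.domain := by
            have : U k t (W φ) ∈ U k t '' (T.domain : Set ℋ) := ⟨W φ, hmem, rfl⟩
            rwa [himg] at this
          refine ⟨by simpa [happ] using h2, ?_⟩
          calc T ⟨((k :: L).map fun l => U l t).prod φ, _⟩
              = U k t (T ⟨W φ, hmem⟩) := hTcomm (W φ) hmem h2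
            _ = U k t (W (T ⟨φ, hφ⟩ + ((L.count j : ℝ) * t) • φ)) := by rw [heq]
            _ = ((k :: L).map fun l => U l t).prod
                  (T ⟨φ, hφ⟩ + (((k :: L).count j : ℝ) * t) • φ) := by
                have hc : (k :: L).count j = L.count j := by
                  simp [List.count_cons, hkj]
                rw [hc]; rfl
    have hofn : (List.ofFn fun k => U k t) = (List.finRange n).map fun k => U k t := by
      simp [List.ofFn_eq_map]
    obtain ⟨h', heq⟩ := claim (List.finRange n) ψ hψ
    have hcount : ((List.finRange n).count j : ℝ) = 1 := by
      simp [List.count_eq_one_of_mem (List.nodup_finRange n) (List.mem_finRange j)]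
    refine ⟨by simpa [prodGroup, hofn] using h', ?_⟩
    have Tcongr : ∀ (x y : ℋ) (hx : x ∈ T.domain) (hy : y ∈ T.domain), x = y →
        T ⟨x, hx⟩ = T ⟨y, hy⟩ := by rintro x y hx hy rfl; rfl
    have : prodGroup U t = ((List.finRange n).map fun k => U k t).prod := by
      rw [prodGroup, hofn]
    rw [show (T ⟨ψ, hψ⟩ + t • ψ) =
        T ⟨ψ, hψ⟩ + (((List.finRange n).count j : ℝ) * t) • ψ by rw [hcount, one_mul]]
    calc T ⟨prodGroup U t ψ, _⟩
        = T ⟨((List.finRange n).map fun k => U k t).prod ψ, h'⟩ := by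
          have hx : prodGroup U t ψ = ((List.finRange n).map fun k => U k t).prod ψ :=
            congrArg (fun e : ℋ ≃ₗᵢ[ℂ] ℋ => e ψ) this
          exact Tcongr _ _ _ h' hx
      _ = ((List.finRange n).map fun k => U k t).prod
            (T ⟨ψ, hψ⟩ + (((List.finRange n).count j : ℝ) * t) • ψ) := heq
      _ = prodGroup U t (T ⟨ψ, hψ⟩ + (((List.finRange n).count j : ℝ) * t) • ψ) := by
          rw [this]
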